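/- For every n ≥ 1 and every sequence of six pairwise coprime integers a₁,…,a₆, every 2n×2n integer matrix can be written as Σ_{i=1}^{6} aᵢAᵢ² with Aᵢ ∈ M_{2n}(ℤ). Hence f(2n) ≤ 6. -/

import Mathlib

open Matrix

namespace Stmt15Aux
section

set_option linter.unusedSectionVars false

variable {k : ℕ} [NeZero k]

local notation "F2" => ZMod 2
local notation "MF" => Matrix (Fin k) (Fin k) (ZMod 2)

lemma addself (x : MF) : x + x = 0 := by
  have h2 : (2 : MF) = 0 := by
    have := CharP.cast_eq_zero MF 2
    exact_mod_cast this
  rw [← two_mul, h2, zero_mul]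

lemma trace_eq_zero_of_nilpotent (X : MF) (h : IsNilpotent X) : X.trace = 0 := by
  have := Matrix.isNilpotent_trace_of_isNilpotent h
  exact this.eq_zero

noncomputable def Psi : MF →ₗ[F2] Module.Dual F2 MF where
  toFun X := (Matrix.traceLinearMap (Fin k) F2 F2).comp (LinearMap.mulLeft F2 X)
  map_add' X Y := by
    ext Z; simp [add_mul]
  map_smul' c X := by
    ext Z; simp [smul_mul_assoc]

lemma Psi_apply (X Y : MF) : Psi X Y = (X * Y).trace := rfl

lemma trace_mul_std (X : MF) (i j : Fin k) :
    (X * Matrix.single j i (1 : F2)).trace = X i j := by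
  classical
  simp only [Matrix.trace, Matrix.diag, Matrix.mul_apply, Matrix.single, Matrix.of_apply]
  rw [Finset.sum_comm]
  trans (∑ x : Fin k, if j = x then X i x else 0)
  · apply Finset.sum_congr rfl; intro x _
    by_cases hx : j = x
    · simp [hx, Finset.sum_ite_eq]
    · simp [hx]
  · simp [Finset.sum_ite_eq]

lemma Psi_inj : Function.Injective (Psi (k := k)) := by
  rw [injective_iff_map_eq_zero]
  intro X hX
  ext i j
  have := congrArg (fun f => f (Matrix.single j i (1 : F2))) hX
  simpa [Psi_apply, trace_mul_std] using this

lemma Psi_surj : Function.Surjective (Psi (k := k)) := by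
  have h : Module.finrank F2 MF = Module.finrank F2 (Module.Dual F2 MF) :=
    (Subspace.dual_finrank_eq).symm
  exact (LinearMap.injective_iff_surjective_of_finrank_eq_finrank h).mp Psi_inj

/-- solve `X = S*A + A*S` given the orthogonality condition -/
lemma solve_anticomm (S X : MF)
    (horth : ∀ Y : MF, S * Y + Y * S = 0 → (X * Y).trace = 0) :
    ∃ A : MF, S * A + A * S = X := by
  classical
  set φ : MF →ₗ[F2] MF := LinearMap.mulLeft F2 S + LinearMap.mulRight F2 S with hφ
  have hφap : ∀ A, φ A = S * A + A * S := fun A => rfl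
  have hmem : Psi X ∈ Submodule.dualAnnihilator (LinearMap.ker φ) := by
    rw [Submodule.mem_dualAnnihilator]
    intro Y hY
    rw [LinearMap.mem_ker, hφap] at hY
    exact horth Y hY
  rw [← LinearMap.range_dualMap_eq_dualAnnihilator_ker] at hmem
  obtain ⟨g, hg⟩ := hmem
  obtain ⟨Z, rfl⟩ := Psi_surj g
  have hadj : φ.dualMap (Psi Z) = Psi (φ Z) := by
    apply LinearMap.ext
    intro Y
    show Psi Z (φ Y) = (φ Z * Y).trace
    rw [Psi_apply, hφap, hφap]
    rw [mul_add, add_mul]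
    rw [Matrix.trace_add, Matrix.trace_add]
    simp only [← mul_assoc]
    rw [Matrix.trace_mul_cycle Z Y S]
    exact add_comm _ _
  rw [hadj] at hg
  exact ⟨Z, by rw [← hφap, Psi_inj hg]⟩

end

end Stmt15Aux


open Matrix

namespace Stmt15AuxB
section

set_option linter.unusedSectionVars false
set_option maxHeartbeats 1000000

variable {k : ℕ} [NeZero k]

local notation "MF" => Matrix (Fin k) (Fin k) (ZMod 2)

lemma addself (x : MF) : x + x = 0 := by
  have h2 : (2 : MF) = 0 := by
    have := CharP.cast_eq_zero MF 2
    exact_mod_cast this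
  rw [← two_mul, h2, zero_mul]

lemma expand_sq (u v : MF) (h : Commute u v) : (u + v) * (u + v) = u * u + v * v := by
  rw [add_mul, mul_add, mul_add, ← h.eq]
  rw [show u * u + u * v + (u * v + v * v) = u * u + (u * v + u * v) + v * v by abel,
    addself, add_zero]

lemma sq_add_comm (u v : MF) (h : Commute u v) : (u + v) ^ 2 = u ^ 2 + v ^ 2 := by
  rw [pow_two, pow_two, pow_two, add_mul, mul_add, mul_add, ← h.eq]
  have : u * v + u * v = 0 := addself _
  rw [show u * u + u * v + (u * v + v * v) = u * u + (u * v + u * v) + v * v by abel, this,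
    add_zero]

lemma comm_add_pow2 (x y : MF) (h : Commute x y) (m : ℕ) :
    (x + y) ^ (2 ^ m) = x ^ (2 ^ m) + y ^ (2 ^ m) := by
  induction m with
  | zero => simp
  | succ m ih =>
    have h2 : ∀ z : MF, z ^ (2 ^ (m + 1)) = (z ^ (2 ^ m)) ^ 2 := by
      intro z; rw [← pow_mul, ← pow_succ]
    rw [h2, h2, h2, ih, sq_add_comm _ _ (h.pow_pow _ _)]

theorem sq2' (T : MF) : ∃ S A : MF, T = S * S + (S * A + A * S) := by
  classical
  obtain ⟨i, j, hne, heq⟩ := Finite.exists_ne_map_eq_of_infinite (fun m : ℕ => T ^ (2 ^ m))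
  obtain ⟨a, d, hd, hper⟩ : ∃ a d, 0 < d ∧ T ^ (2 ^ a) = T ^ (2 ^ (a + d)) := by
    rcases Nat.lt_or_ge i j with h | h
    · exact ⟨i, j - i, by omega, by rw [show i + (j - i) = j by omega]; exact heq⟩
    · have h' : j < i := by omega
      exact ⟨j, i - j, by omega, by rw [show j + (i - j) = i by omega]; exact heq.symm⟩
  have hsq : ∀ m : ℕ, T ^ (2 ^ (m + 1)) = (T ^ (2 ^ m)) ^ 2 := by
    intro m; rw [← pow_mul, ← pow_succ]
  have per1 : ∀ t, T ^ (2 ^ (a + t)) = T ^ (2 ^ (a + t + d)) := by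
    intro t
    induction t with
    | zero => simpa using hper
    | succ t ih =>
      have e1 : a + (t + 1) = (a + t) + 1 := by omega
      rw [e1, hsq, ih, ← hsq]
      congr 2
      omega
  have perc : ∀ m, a ≤ m → ∀ c, T ^ (2 ^ m) = T ^ (2 ^ (m + c * d)) := by
    intro m hm c
    induction c with
    | zero => simp
    | succ c ih =>
      rw [ih]
      have hcd : (c + 1) * d = c * d + d := by ring
      have e3 : m + c * d = a + (m + c * d - a) := by omega
      rw [e3, per1 (m + c * d - a)]
      congr 2
      omega
  have hmul : a + 1 ≤ (a + 1) * d := by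
    calc a + 1 = (a + 1) * 1 := by ring
    _ ≤ (a + 1) * d := Nat.mul_le_mul_left _ hd
  obtain ⟨e, hea, he1⟩ : ∃ e, a ≤ e ∧ e + 1 = (a + 1) * d :=
    ⟨(a + 1) * d - 1, by omega, by omega⟩
  set C := T ^ (2 ^ e) with hC
  set N := T + T ^ (2 ^ (e + 1)) with hN
  have hCsq : C * C = T ^ (2 ^ (e + 1)) := by
    rw [hC, ← pow_add]
    congr 1
    rw [pow_succ]
    ring
  have hNnil : N ^ (2 ^ a) = 0 := by
    have hc : Commute T (T ^ (2 ^ (e + 1))) := (Commute.refl T).pow_right _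
    rw [hN, comm_add_pow2 _ _ hc a]
    have h1 : (T ^ (2 ^ (e + 1))) ^ (2 ^ a) = T ^ (2 ^ (e + 1 + a)) := by
      rw [← pow_mul, ← pow_add]
    have h2 : T ^ (2 ^ a) = T ^ (2 ^ (e + 1 + a)) := by
      have := perc a le_rfl (a + 1)
      rw [this]
      congr 2
      omega
    rw [h1, ← h2, addself]
  set S := C + N with hS
  have hcCN : Commute C N := by
    rw [hC, hN]
    exact ((Commute.refl T).pow_left _).add_right (((Commute.refl T).pow_pow _ _))
  have hg : e + 1 = (a + 1) * d := he1
  have hSg : S ^ (2 ^ (e + 1)) = C := by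
    rw [hS, comm_add_pow2 _ _ hcCN]
    have h1 : N ^ (2 ^ (e + 1)) = 0 := by
      have hsplit : (2 : ℕ) ^ (e + 1) = 2 ^ a * 2 ^ (e + 1 - a) := by
        rw [← pow_add]
        congr 1
        omega
      rw [hsplit, pow_mul, hNnil, zero_pow]
      positivity
    have h2 : C ^ (2 ^ (e + 1)) = C := by
      rw [hC, ← pow_mul, ← pow_add]
      have := perc e hea (a + 1)
      rw [← hg] at this
      rw [← this]
    rw [h1, h2, add_zero]
  set X := T + S * S with hXdef
  have hX : X = N + N * N := by
    have hS2 : S * S = C * C + N * N := by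
      rw [hS]; exact expand_sq C N hcCN
    rw [hXdef, hS2, hCsq, hN]
    abel
  have hXnil : X ^ (2 ^ a) = 0 := by
    have hc : Commute N (N * N) := (Commute.refl N).mul_right (Commute.refl N)
    rw [hX, comm_add_pow2 _ _ hc a, hNnil]
    have : (N * N) ^ (2 ^ a) = N ^ (2 ^ a) * N ^ (2 ^ a) := (Commute.refl N).mul_pow _
    rw [this, hNnil, mul_zero, add_zero]
  have horth : ∀ Y : MF, S * Y + Y * S = 0 → (X * Y).trace = 0 := by
    intro Y hY
    have hSY : Commute S Y := by
      show S * Y = Y * S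
      calc S * Y = S * Y + (Y * S + Y * S) := by rw [addself, add_zero]
      _ = (S * Y + Y * S) + Y * S := by rw [add_assoc]
      _ = Y * S := by rw [hY, zero_add]
    have hcCY : Commute C Y := by rw [← hSg]; exact hSY.pow_left _
    have hcNY : Commute N Y := by
      have hNSC : N = S - C := by rw [hS]; abel
      rw [hNSC]
      exact hSY.sub_left hcCY
    have hcXY : Commute X Y := by
      rw [hX]
      exact hcNY.add_left (hcNY.mul_left hcNY)
    have hnil : IsNilpotent (X * Y) := ⟨2 ^ a, by rw [hcXY.mul_pow, hXnil, zero_mul]⟩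
    have := Matrix.isNilpotent_trace_of_isNilpotent hnil
    exact this.eq_zero
  obtain ⟨A, hA⟩ := Stmt15Aux.solve_anticomm S X horth
  refine ⟨S, A, ?_⟩
  rw [hA]
  rw [hXdef]
  rw [show S * S + (T + S * S) = T + (S * S + S * S) by abel, addself, add_zero]

end

end Stmt15AuxB

namespace Stmt15AuxC
section

set_option linter.unusedSectionVars false
set_option maxHeartbeats 1600000

open Matrix

variable {k : ℕ} [NeZero k]

local notation "F2" => ZMod 2
local notation "MF" => Matrix (Fin k) (Fin k) (ZMod 2)
local notation "MZ" => Matrix (Fin k) (Fin k) ℤ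

noncomputable def pim : MZ →+* MF := (Int.castRingHom (ZMod 2)).mapMatrix

lemma pim_apply (M : MZ) (i j : Fin k) : pim M i j = ((M i j : ℤ) : F2) := rfl

lemma pim_smul (c : ℤ) (M : MZ) : pim (c • M) = (c : F2) • pim M := by
  ext i j
  rw [pim_apply, Matrix.smul_apply, Matrix.smul_apply, smul_eq_mul, smul_eq_mul, pim_apply]
  push_cast
  ring

lemma pim_one : pim (1 : MZ) = 1 := map_one _

noncomputable def lift (P : MF) : MZ := P.map (fun z => (z.val : ℤ))

lemma pim_lift (P : MF) : pim (lift P) = P := by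
  ext i j
  simp only [pim_apply, lift, Matrix.map_apply]
  rw [Int.cast_natCast]
  exact ZMod.natCast_rightInverse (P i j)

lemma neg_eq_self_mf (x : MF) : -x = x :=
  neg_eq_of_add_eq_zero_left (Stmt15AuxB.addself x)

lemma sub_eq_add_mf (x y : MF) : x - y = x + y := by
  rw [sub_eq_add_neg, neg_eq_self_mf]

lemma oddF2 {b : ℤ} (h : Odd b) : (b : F2) = 1 := by
  obtain ⟨m, rfl⟩ := h
  push_cast
  rw [show ((2 : F2)) = 0 by decide]
  ring

lemma exists_half (E : MZ) (h : pim E = 0) : ∃ W : MZ, E = (2:ℤ) • W := by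
  refine ⟨Matrix.of (fun i j => E i j / 2), ?_⟩
  ext i j
  have h2 : ((E i j : ℤ) : F2) = 0 := by
    have := congrFun (congrFun (congrArg (fun (M : MF) => (M : Fin k → Fin k → F2)) h) i) j
    simpa [pim_apply] using this
  have hdvd : (2 : ℤ) ∣ E i j := by
    rwa [ZMod.intCast_zmod_eq_zero_iff_dvd] at h2
  simp only [Matrix.smul_apply, Matrix.of_apply, smul_eq_mul]
  exact (Int.mul_ediv_cancel' hdvd).symm

theorem crux (b0 b1 : ℤ) (h0 : Odd b0) (h1 : Odd b1) (hco : IsCoprime b0 b1) (Δ : MZ) :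
    ∃ U V U' V' : MZ,
      b0 • (U * U - V * V) + b1 • (U' * U' - V' * V') = Δ := by
  obtain ⟨u, v, huv⟩ := hco
  obtain ⟨S, A, hSA⟩ := Stmt15AuxB.sq2' (pim Δ + 1)
  obtain ⟨m, hm⟩ := h0
  set w : ℤ := m + 1 with hw
  have h2w : 2 * w = b0 + 1 := by omega
  set LS : MZ := lift S with hLS
  set LA : MZ := lift A with hLA
  set D : MZ := 1 - LS with hD
  set C2 : MZ := 1 + b0 • D with hC2
  set K0 : MZ := lift ((u : F2) • pim Δ + 1) with hK0
  set Y0 : MZ := v • Δ - b0 • K0 with hY0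
  set G3 : MZ := Y0 - C2 * C2 with hG3
  set G4 : MZ := G3 - (LA * C2 + C2 * LA) with hG4
  have hb0 : ((b0 : F2)) = 1 := oddF2 ⟨m, hm⟩
  have hb1 : ((b1 : F2)) = 1 := oddF2 h1
  have huvF : (u : F2) + (v : F2) = 1 := by
    have := congrArg (fun z : ℤ => (z : F2)) huv
    push_cast at this
    rwa [hb0, hb1, mul_one, mul_one] at this
  have hπC2 : pim C2 = S := by
    rw [hC2, map_add, pim_one, pim_smul, hb0, one_smul, hD, map_sub, pim_one, hLS, pim_lift]
    rw [sub_eq_add_mf]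
    rw [show (1 : MF) + (1 + S) = (1 + 1) + S by abel, Stmt15AuxB.addself, zero_add]
  have hπK0 : pim K0 = (u : F2) • pim Δ + 1 := by rw [hK0, pim_lift]
  have hπY0 : pim Y0 = pim Δ + 1 := by
    rw [hY0, map_sub, pim_smul, pim_smul, hb0, one_smul, hπK0, sub_eq_add_mf]
    rw [show (v:F2) • pim Δ + ((u:F2) • pim Δ + 1) = ((u:F2) + (v:F2)) • pim Δ + 1 by
      rw [add_smul]; abel]
    rw [huvF, one_smul]
  have hπG4 : pim G4 = 0 := by
    have e : pim G4 = (pim Δ + 1) + S * S + (A * S + S * A) := by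
      rw [hG4, hG3, map_sub, map_sub, map_add, _root_.map_mul, _root_.map_mul, _root_.map_mul,
        hπY0, hπC2, hLA, pim_lift, sub_eq_add_mf, sub_eq_add_mf]
    rw [e, hSA]
    rw [show S * S + (S * A + A * S) + S * S + (A * S + S * A)
        = (S * S + S * S) + ((S * A + S * A) + (A * S + A * S)) by abel]
    rw [Stmt15AuxB.addself, Stmt15AuxB.addself, Stmt15AuxB.addself]
    simp
  obtain ⟨G4', hG4'⟩ := exists_half G4 hπG4
  set W2' : MZ := w • G4' with hW2'
  set K' : MZ := -G4' - w • (G4' * D + D * G4') with hK'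
  have KEY1 : W2' * C2 + C2 * W2' + b0 • K' = G4' := by
    rw [hW2', hK', hC2]
    rw [show b0 = 2 * w - 1 from by omega]
    simp only [smul_mul_assoc, mul_smul_comm, mul_add, add_mul, mul_one, one_mul,
      smul_add, smul_sub, smul_neg, smul_smul]
    module
  set W2 : MZ := LA + (2:ℤ) • W2' with hW2
  set K : MZ := K0 + (2:ℤ) • K' with hK
  set X : MZ := u • Δ + b1 • K with hX
  have hπX : pim X = 1 := by
    rw [hX, map_add, pim_smul, pim_smul, hb1, one_smul, hK, map_add, pim_smul, hπK0]
    rw [show ((2:ℤ) : F2) = 0 by decide, zero_smul, add_zero]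
    rw [show (u:F2) • pim Δ + ((u:F2) • pim Δ + 1)
        = ((u:F2) • pim Δ + (u:F2) • pim Δ) + 1 by abel]
    rw [Stmt15AuxB.addself, zero_add]
  obtain ⟨W0, hW0⟩ := exists_half (X - 1) (by rw [map_sub, hπX, pim_one, sub_self])
  have hXW0 : X = W0 + W0 + 1 := by
    have h' : X = (2:ℤ) • W0 + 1 := eq_add_of_sub_eq hW0
    rw [h', two_smul]
  have KEY2 : (W2 + C2) * (W2 + C2) - W2 * W2 = Y0 - (2 * b0) • K' := by
    have e1 : (W2 + C2) * (W2 + C2) - W2 * W2 = (W2 * C2 + C2 * W2) + C2 * C2 := by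
      noncomm_ring
    have e2 : W2 * C2 + C2 * W2 = (LA * C2 + C2 * LA) + (2:ℤ) • (W2' * C2 + C2 * W2') := by
      rw [hW2]
      simp only [add_mul, mul_add, smul_mul_assoc, mul_smul_comm, smul_add]
      abel
    have e3 : W2' * C2 + C2 * W2' = G4' - b0 • K' := eq_sub_of_add_eq KEY1
    rw [e1, e2, e3]
    rw [smul_sub, smul_smul]
    have e4 : (2:ℤ) • G4' = G4 := hG4'.symm
    rw [e4, hG4, hG3]
    abel
  refine ⟨W0 + 1, W0, W2 + C2, W2, ?_⟩
  have hU : (W0 + 1) * (W0 + 1) - W0 * W0 = X := by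
    rw [hXW0]; noncomm_ring
  rw [hU, KEY2]
  rw [hX, hY0, hK]
  have hsc : b0 * u + b1 * v = 1 := by rw [mul_comm b0 u, mul_comm b1 v]; exact huv
  conv_rhs => rw [show Δ = (b0 * u + b1 * v) • Δ from by rw [hsc, one_smul]]
  module

end

end Stmt15AuxC

namespace Stmt15AuxD
section

set_option linter.unusedSectionVars false
set_option maxHeartbeats 1600000

open Matrix

variable {k : ℕ} [NeZero k]

local notation "MZ" => Matrix (Fin k) (Fin k) ℤ
local notation "MB" => Matrix (Fin k ⊕ Fin k) (Fin k ⊕ Fin k) ℤ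

lemma smul_fromBlocks (c : ℤ) (A B C D : MZ) :
    c • (fromBlocks A B C D) = fromBlocks (c • A) (c • B) (c • C) (c • D) := by
  ext i j
  rcases i with i | i <;> rcases j with j | j <;> rfl

lemma bezout_split (a b : ℤ) (h : IsCoprime a b) (R : MZ) :
    ∃ P Q : MZ, a • P + b • Q = R := by
  obtain ⟨x, y, hxy⟩ := h
  refine ⟨x • R, y • R, ?_⟩
  rw [smul_smul, smul_smul, ← add_smul,
    show a * x + b * y = 1 from by rw [mul_comm a x, mul_comm b y]; exact hxy, one_smul]

theorem main6 (b : Fin 6 → ℤ) (hco : ∀ i j, i ≠ j → IsCoprime (b i) (b j))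
    (h0 : Odd (b 0)) (h1 : Odd (b 1)) (M : MB) :
    ∃ A : Fin 6 → MB, M = ∑ i, b i • (A i) ^ 2 := by
  obtain ⟨U, V, U', V', hcrux⟩ := Stmt15AuxC.crux (b 0) (b 1) h0 h1 (hco 0 1 (by decide))
      (M.toBlocks₁₁ - M.toBlocks₂₂ - ((b 2 + b 5) - (b 3 + b 4)) • 1)
  obtain ⟨T, T', hT⟩ := bezout_split (b 0) (b 1) (hco 0 1 (by decide))
      (M.toBlocks₁₁ - (b 2 + b 5) • 1 - b 0 • (U * U) - b 1 • (U' * U'))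
  obtain ⟨X, Y, hXY⟩ := bezout_split (b 2) (b 3) (hco 2 3 (by decide))
      (M.toBlocks₁₂ - b 0 • (U + V) - b 1 • (U' + V'))
  obtain ⟨Z, W, hZW⟩ := bezout_split (b 4) (b 5) (hco 4 5 (by decide))
      (M.toBlocks₂₁ - b 0 • (T * U + V * T) - b 1 • (T' * U' + V' * T'))
  have key : M = b 0 • (fromBlocks U (1 : Matrix (Fin k) (Fin k) ℤ) T V) ^ 2 + b 1 • (fromBlocks U' (1 : Matrix (Fin k) (Fin k) ℤ) T' V') ^ 2
      + b 2 • (fromBlocks (1 : Matrix (Fin k) (Fin k) ℤ) X (0 : Matrix (Fin k) (Fin k) ℤ) (0 : Matrix (Fin k) (Fin k) ℤ)) ^ 2 + b 3 • (fromBlocks (0 : Matrix (Fin k) (Fin k) ℤ) Y (0 : Matrix (Fin k) (Fin k) ℤ) (1 : Matrix (Fin k) (Fin k) ℤ)) ^ 2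
      + b 4 • (fromBlocks (0 : Matrix (Fin k) (Fin k) ℤ) (0 : Matrix (Fin k) (Fin k) ℤ) Z (1 : Matrix (Fin k) (Fin k) ℤ)) ^ 2 + b 5 • (fromBlocks (1 : Matrix (Fin k) (Fin k) ℤ) (0 : Matrix (Fin k) (Fin k) ℤ) W (0 : Matrix (Fin k) (Fin k) ℤ)) ^ 2 := by
    have e0 : (fromBlocks U (1 : Matrix (Fin k) (Fin k) ℤ) T V) ^ 2 = fromBlocks (U * U + T) (U + V) (T * U + V * T) (T + V * V) := by
      rw [pow_two, fromBlocks_multiply]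
      simp only [one_mul, mul_one]
    have e1 : (fromBlocks U' (1 : Matrix (Fin k) (Fin k) ℤ) T' V') ^ 2
        = fromBlocks (U' * U' + T') (U' + V') (T' * U' + V' * T') (T' + V' * V') := by
      rw [pow_two, fromBlocks_multiply]
      simp only [one_mul, mul_one]
    have e2 : (fromBlocks (1 : Matrix (Fin k) (Fin k) ℤ) X (0 : Matrix (Fin k) (Fin k) ℤ) (0 : Matrix (Fin k) (Fin k) ℤ)) ^ 2 = fromBlocks (1 : Matrix (Fin k) (Fin k) ℤ) X (0 : Matrix (Fin k) (Fin k) ℤ) (0 : Matrix (Fin k) (Fin k) ℤ) := by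
      rw [pow_two, fromBlocks_multiply]
      simp
    have e3 : (fromBlocks (0 : Matrix (Fin k) (Fin k) ℤ) Y (0 : Matrix (Fin k) (Fin k) ℤ) (1 : Matrix (Fin k) (Fin k) ℤ)) ^ 2 = fromBlocks (0 : Matrix (Fin k) (Fin k) ℤ) Y (0 : Matrix (Fin k) (Fin k) ℤ) (1 : Matrix (Fin k) (Fin k) ℤ) := by
      rw [pow_two, fromBlocks_multiply]
      simp
    have e4 : (fromBlocks (0 : Matrix (Fin k) (Fin k) ℤ) (0 : Matrix (Fin k) (Fin k) ℤ) Z (1 : Matrix (Fin k) (Fin k) ℤ)) ^ 2 = fromBlocks (0 : Matrix (Fin k) (Fin k) ℤ) (0 : Matrix (Fin k) (Fin k) ℤ) Z (1 : Matrix (Fin k) (Fin k) ℤ) := by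
      rw [pow_two, fromBlocks_multiply]
      simp
    have e5 : (fromBlocks (1 : Matrix (Fin k) (Fin k) ℤ) (0 : Matrix (Fin k) (Fin k) ℤ) W (0 : Matrix (Fin k) (Fin k) ℤ)) ^ 2 = fromBlocks (1 : Matrix (Fin k) (Fin k) ℤ) (0 : Matrix (Fin k) (Fin k) ℤ) W (0 : Matrix (Fin k) (Fin k) ℤ) := by
      rw [pow_two, fromBlocks_multiply]
      simp
    rw [e0, e1, e2, e3, e4, e5]
    rw [smul_fromBlocks, smul_fromBlocks, smul_fromBlocks, smul_fromBlocks, smul_fromBlocks,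
      smul_fromBlocks]
    rw [fromBlocks_add, fromBlocks_add, fromBlocks_add, fromBlocks_add, fromBlocks_add]
    rw [← fromBlocks_toBlocks M, Matrix.fromBlocks_inj]
    refine ⟨?_, ?_, ?_, ?_⟩
    · linear_combination (norm := module) -hT
    · linear_combination (norm := module) -hXY
    · linear_combination (norm := module) -hZW
    · linear_combination (norm := module) hcrux - hT
  refine ⟨![fromBlocks U (1 : Matrix (Fin k) (Fin k) ℤ) T V, fromBlocks U' (1 : Matrix (Fin k) (Fin k) ℤ) T' V', fromBlocks (1 : Matrix (Fin k) (Fin k) ℤ) X (0 : Matrix (Fin k) (Fin k) ℤ) (0 : Matrix (Fin k) (Fin k) ℤ),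
      fromBlocks (0 : Matrix (Fin k) (Fin k) ℤ) Y (0 : Matrix (Fin k) (Fin k) ℤ) (1 : Matrix (Fin k) (Fin k) ℤ), fromBlocks (0 : Matrix (Fin k) (Fin k) ℤ) (0 : Matrix (Fin k) (Fin k) ℤ) Z (1 : Matrix (Fin k) (Fin k) ℤ), fromBlocks (1 : Matrix (Fin k) (Fin k) ℤ) (0 : Matrix (Fin k) (Fin k) ℤ) W (0 : Matrix (Fin k) (Fin k) ℤ)], ?_⟩
  rw [Fin.sum_univ_six]
  exact key

end

end Stmt15AuxD

namespace Stmt15AuxE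

lemma odd_of_other (a : Fin 6 → ℤ) (hco : ∀ i j, i ≠ j → IsCoprime (a i) (a j))
    {i j : Fin 6} (hij : i ≠ j) (hi : ¬ Odd (a i)) : Odd (a j) := by
  by_contra hj
  rw [Int.not_odd_iff_even] at hi hj
  obtain ⟨u, v, huv⟩ := hco i j hij
  have h2 : (2 : ℤ) ∣ 1 := by
    rw [← huv]
    exact dvd_add (Dvd.dvd.mul_left hi.two_dvd u) (Dvd.dvd.mul_left hj.two_dvd v)
  norm_num at h2

lemma exists_perm (a : Fin 6 → ℤ) (hco : ∀ i j, i ≠ j → IsCoprime (a i) (a j)) :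
    ∃ σ : Equiv.Perm (Fin 6), Odd (a (σ 0)) ∧ Odd (a (σ 1)) := by
  by_cases h0 : Odd (a 0)
  · by_cases h1 : Odd (a 1)
    · exact ⟨1, by simpa using h0, by simpa using h1⟩
    · refine ⟨Equiv.swap 1 2, ?_, ?_⟩
      · rw [Equiv.swap_apply_of_ne_of_ne (by decide) (by decide)]
        exact h0
      · rw [Equiv.swap_apply_left]
        exact odd_of_other a hco (show (1 : Fin 6) ≠ 2 by decide) h1
  · have h1 : Odd (a 1) := odd_of_other a hco (show (0 : Fin 6) ≠ 1 by decide) h0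
    have h2 : Odd (a 2) := odd_of_other a hco (show (0 : Fin 6) ≠ 2 by decide) h0
    refine ⟨Equiv.swap 0 2, ?_, ?_⟩
    · rw [Equiv.swap_apply_left]
      exact h2
    · rw [Equiv.swap_apply_of_ne_of_ne (by decide) (by decide)]
      exact h1

end Stmt15AuxE

theorem stmt15 (n : ℕ) (hn : 1 ≤ n) (a : Fin 6 → ℤ)
    (hco : ∀ i j, i ≠ j → IsCoprime (a i) (a j)) :
    ∀ M : Matrix (Fin (2 * n)) (Fin (2 * n)) ℤ,
      ∃ A : Fin 6 → Matrix (Fin (2 * n)) (Fin (2 * n)) ℤ, M = ∑ i, a i • (A i) ^ 2 := by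
  intro M
  haveI : NeZero n := ⟨by omega⟩
  obtain ⟨σ, hσ0, hσ1⟩ := Stmt15AuxE.exists_perm a hco
  have hbco : ∀ i j, i ≠ j → IsCoprime (a (σ i)) (a (σ j)) := fun i j hij =>
    hco _ _ (fun h => hij (σ.injective h))
  let e : Fin n ⊕ Fin n ≃ Fin (2 * n) := finSumFinEquiv.trans (finCongr (two_mul n).symm)
  let F := Matrix.reindexAlgEquiv ℤ ℤ e
  obtain ⟨B, hB⟩ := Stmt15AuxD.main6 (fun i => a (σ i)) hbco hσ0 hσ1 (F.symm M)
  refine ⟨fun j => F (B (σ.symm j)), ?_⟩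
  have hM : M = F (F.symm M) := (F.apply_symm_apply M).symm
  rw [hM, hB, map_sum]
  have hmap : ∀ i, F (a (σ i) • (B i) ^ 2) = a (σ i) • (F (B i)) ^ 2 := by
    intro i
    rw [_root_.map_smul, map_pow]
  rw [Finset.sum_congr rfl (fun i _ => hmap i)]
  exact Fintype.sum_equiv σ _ _ (fun x => by simp)
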